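/- Let μ > 1, let 0 < α₁ < α₂ < 1 and c₁, c₂ > 0 be real numbers, and let R₁, R₂ : ℕ → ℝ satisfy R_m(n)·n^μ·α_m^n → c_m as n → ∞ for m = 1, 2. Suppose x : ℕ → ℕ is a sequence such that R₂(n + x_n)/R₁(n) converges to a positive real limit as n → ∞. Then x_n/n → ln(α₁)/ln(α₂) − 1 as n → ∞. -/

import Mathlib

open Filter

/- Eq. (23) (E:gut) in the proof of Proposition 2: if the shifted ratio
`R₂(n + x_n)/R₁(n)` converges to a positive limit, then the shift satisfies
`x_n/n → ln α₁ / ln α₂ − 1`. -/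
theorem stmt_5 (μ α₁ α₂ c₁ c₂ : ℝ) (hμ : 1 < μ)
    (hα₁ : 0 < α₁) (hα : α₁ < α₂) (hα₂ : α₂ < 1) (hc₁ : 0 < c₁) (hc₂ : 0 < c₂)
    (R₁ R₂ : ℕ → ℝ)
    (h₁ : Tendsto (fun n : ℕ => R₁ n * (n : ℝ) ^ μ * α₁ ^ n) atTop (nhds c₁))
    (h₂ : Tendsto (fun n : ℕ => R₂ n * (n : ℝ) ^ μ * α₂ ^ n) atTop (nhds c₂))
    (x : ℕ → ℕ) (L : ℝ) (hL : 0 < L)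
    (hconv : Tendsto (fun n : ℕ => R₂ (n + x n) / R₁ n) atTop (nhds L)) :
    Tendsto (fun n : ℕ => (x n : ℝ) / n) atTop
      (nhds (Real.log α₁ / Real.log α₂ - 1)) := by
  have hα₂pos : 0 < α₂ := hα₁.trans hα
  have hlog₂ : Real.log α₂ < 0 := Real.log_neg hα₂pos hα₂
  have hlog₂' : (0:ℝ) < -Real.log α₂ := by linarith
  set m : ℕ → ℕ := fun n => n + x n with hmdef
  have hmge : ∀ n, n ≤ m n := fun n => Nat.le_add_right _ _
  have hmtop : Tendsto m atTop atTop := tendsto_atTop_mono hmge tendsto_id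
  have hg₂ : Tendsto (fun n => R₂ (m n) * (m n : ℝ) ^ μ * α₂ ^ (m n)) atTop (nhds c₂) :=
    h₂.comp hmtop
  have hg₁pos : ∀ᶠ n in atTop, 0 < R₁ n * (n : ℝ) ^ μ * α₁ ^ n :=
    h₁.eventually (eventually_gt_nhds hc₁)
  have hg₂pos : ∀ᶠ n in atTop, 0 < R₂ (m n) * (m n : ℝ) ^ μ * α₂ ^ (m n) :=
    hg₂.eventually (eventually_gt_nhds hc₂)
  have hgdiv : Tendsto (fun n => (R₂ (m n) * (m n : ℝ) ^ μ * α₂ ^ (m n)) /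
      (R₁ n * (n : ℝ) ^ μ * α₁ ^ n)) atTop (nhds (c₂ / c₁)) := hg₂.div h₁ (ne_of_gt hc₁)
  set φ : ℕ → ℝ := fun n => ((n : ℝ) ^ μ * α₁ ^ n) / (((m n : ℕ) : ℝ) ^ μ * α₂ ^ (m n))
    with hφdef
  have hφeq : ∀ᶠ n in atTop, φ n = (R₂ (m n) / R₁ n) /
      ((R₂ (m n) * (m n : ℝ) ^ μ * α₂ ^ (m n)) / (R₁ n * (n : ℝ) ^ μ * α₁ ^ n)) := by
    filter_upwards [hg₁pos, hg₂pos, eventually_ge_atTop 1] with n hp1 hp2 hn1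
    have hn0 : (0:ℝ) < (n:ℝ) := by exact_mod_cast hn1
    have hm0 : (0:ℝ) < ((m n : ℕ):ℝ) := by
      exact_mod_cast Nat.lt_of_lt_of_le hn1 (hmge n)
    have hd₁ : (0:ℝ) < (n : ℝ) ^ μ * α₁ ^ n := by positivity
    have hd₂ : (0:ℝ) < ((m n : ℕ) : ℝ) ^ μ * α₂ ^ (m n) := by positivity
    have hR₁ : 0 < R₁ n := by
      rw [mul_assoc] at hp1
      exact (mul_pos_iff_of_pos_right hd₁).mp hp1
    have hR₂ : 0 < R₂ (m n) := by
      rw [mul_assoc] at hp2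
      exact (mul_pos_iff_of_pos_right hd₂).mp hp2
    rw [hφdef]
    field_simp
  have hK : (0:ℝ) < L / (c₂ / c₁) := by positivity
  have hφ : Tendsto φ atTop (nhds (L / (c₂ / c₁))) :=
    (hconv.div hgdiv (by positivity)).congr' (hφeq.mono fun n h => h.symm)
  have hlogφ : Tendsto (fun n => Real.log (φ n)) atTop (nhds (Real.log (L / (c₂ / c₁)))) :=
    hφ.log (ne_of_gt hK)
  have hlogφdiv : Tendsto (fun n : ℕ => Real.log (φ n) / n) atTop (nhds 0) :=
    hlogφ.div_atTop tendsto_natCast_atTop_atTop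
  have hlogdiv : Tendsto (fun y : ℝ => Real.log y / y) atTop (nhds 0) :=
    Real.isLittleO_log_id_atTop.tendsto_div_nhds_zero
  have hA : Tendsto (fun n : ℕ => μ * Real.log n / n) atTop (nhds 0) := by
    have := (hlogdiv.comp tendsto_natCast_atTop_atTop).const_mul μ
    simpa [Function.comp, mul_div_assoc] using this
  set G : ℕ → ℝ := fun n => μ * Real.log ((m n : ℕ) : ℝ) / n +
      (((m n : ℕ) : ℝ) / n) * Real.log α₂ with hGdef
  have hGeq : ∀ᶠ n in atTop, G n = μ * Real.log n / n + Real.log α₁ - Real.log (φ n) / n := by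
    filter_upwards [eventually_ge_atTop 1] with n hn1
    have hn0 : (0:ℝ) < (n:ℝ) := by exact_mod_cast hn1
    have hm0 : (0:ℝ) < ((m n : ℕ):ℝ) := by
      exact_mod_cast Nat.lt_of_lt_of_le hn1 (hmge n)
    have hφval : Real.log (φ n) = (μ * Real.log n + n * Real.log α₁)
        - (μ * Real.log ((m n : ℕ) : ℝ) + (m n : ℕ) * Real.log α₂) := by
      rw [hφdef]
      rw [Real.log_div (by positivity) (by positivity),
        Real.log_mul (by positivity) (by positivity),
        Real.log_mul (by positivity) (by positivity),
        Real.log_rpow hn0, Real.log_rpow hm0, Real.log_pow, Real.log_pow]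
    rw [hGdef, hφval]
    field_simp
    ring
  have hG : Tendsto G atTop (nhds (Real.log α₁)) := by
    have h := (hA.add_const (Real.log α₁)).sub hlogφdiv
    rw [zero_add, sub_zero] at h
    exact h.congr' (hGeq.mono fun n h' => h'.symm)
  -- eventually μ * log k ≤ (-log α₂)/2 * k
  have hml : ∀ᶠ k : ℕ in atTop, μ * Real.log k ≤ (-Real.log α₂) / 2 * k := by
    have h0 : Tendsto (fun k : ℕ => μ * Real.log k / k) atTop (nhds 0) := hA
    filter_upwards [h0.eventually (eventually_le_nhds (by positivity :
        (0:ℝ) < (-Real.log α₂) / 2)), eventually_ge_atTop 1] with k hk hk1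
    have hk0 : (0:ℝ) < (k:ℝ) := by exact_mod_cast hk1
    calc μ * Real.log k = μ * Real.log k / k * k := by field_simp
    _ ≤ (-Real.log α₂) / 2 * k := by
        apply mul_le_mul_of_nonneg_right hk hk0.le
  set B : ℝ := max 1 (2 * (|Real.log α₁| + 1) / (-Real.log α₂)) with hBdef
  have hB1 : (1:ℝ) ≤ B := le_max_left _ _
  have hsbound : ∀ᶠ n in atTop, ((m n : ℕ) : ℝ) / n ≤ B := by
    filter_upwards [hG.eventually (eventually_ge_nhds
        (by linarith : Real.log α₁ - 1 < Real.log α₁)), hmtop.eventually hml,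
        eventually_ge_atTop 1] with n hGn hmln hn1
    have hn0 : (0:ℝ) < (n:ℝ) := by exact_mod_cast hn1
    have key : ((m n : ℕ) : ℝ) / n * (-Real.log α₂) ≤
        (-Real.log α₂) / 2 * (((m n : ℕ) : ℝ) / n) + (|Real.log α₁| + 1) := by
      have h1 : μ * Real.log ((m n : ℕ) : ℝ) / n ≤
          (-Real.log α₂) / 2 * (((m n : ℕ) : ℝ) / n) := by
        rw [div_le_iff₀ hn0]
        calc μ * Real.log ((m n : ℕ) : ℝ) ≤ (-Real.log α₂) / 2 * (m n : ℕ) := hmln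
        _ = (-Real.log α₂) / 2 * (((m n : ℕ) : ℝ) / n) * n := by field_simp
      have h2 : Real.log α₁ - 1 ≤ G n := hGn
      have h3 : -Real.log α₁ ≤ |Real.log α₁| := neg_le_abs _
      rw [hGdef] at h2
      nlinarith
    have hs : ((m n : ℕ) : ℝ) / n ≤ 2 * (|Real.log α₁| + 1) / (-Real.log α₂) := by
      rw [le_div_iff₀ hlog₂']
      nlinarith
    exact hs.trans (le_max_right _ _)
  -- μ log(m n)/n → 0 by squeeze
  have hmB : ∀ᶠ n in atTop, ((m n : ℕ) : ℝ) ≤ B * n := by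
    filter_upwards [hsbound, eventually_ge_atTop 1] with n hs hn1
    have hn0 : (0:ℝ) < (n:ℝ) := by exact_mod_cast hn1
    calc ((m n : ℕ) : ℝ) = ((m n : ℕ) : ℝ) / n * n := by field_simp
    _ ≤ B * n := mul_le_mul_of_nonneg_right hs hn0.le
  have hupper : Tendsto (fun n : ℕ => μ * (Real.log B + Real.log n) / n) atTop (nhds 0) := by
    have h1 : Tendsto (fun n : ℕ => μ * Real.log B / n) atTop (nhds 0) :=
      tendsto_const_nhds.div_atTop tendsto_natCast_atTop_atTop
    have := h1.add hA
    rw [add_zero] at this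
    refine this.congr fun n => by ring
  have hlogm : Tendsto (fun n : ℕ => μ * Real.log ((m n : ℕ) : ℝ) / n) atTop (nhds 0) := by
    refine tendsto_of_tendsto_of_tendsto_of_le_of_le' tendsto_const_nhds hupper ?_ ?_
    · filter_upwards [eventually_ge_atTop 1] with n hn1
      have hm1 : (1:ℝ) ≤ ((m n : ℕ) : ℝ) := by exact_mod_cast Nat.le_trans hn1 (hmge n)
      have : (0:ℝ) ≤ Real.log ((m n : ℕ) : ℝ) := Real.log_nonneg hm1
      positivity
    · filter_upwards [hmB, eventually_ge_atTop 1] with n hmb hn1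
      have hn0 : (0:ℝ) < (n:ℝ) := by exact_mod_cast hn1
      have hm0 : (0:ℝ) < ((m n : ℕ):ℝ) := by
        exact_mod_cast Nat.lt_of_lt_of_le hn1 (hmge n)
      have hlB : Real.log ((m n : ℕ) : ℝ) ≤ Real.log B + Real.log n := by
        calc Real.log ((m n : ℕ) : ℝ) ≤ Real.log (B * n) := by
              apply Real.log_le_log hm0 hmb
        _ = Real.log B + Real.log n := Real.log_mul (by linarith) (ne_of_gt hn0)
      have hnum : μ * Real.log ((m n : ℕ) : ℝ) ≤ μ * (Real.log B + Real.log n) :=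
        mul_le_mul_of_nonneg_left hlB (by linarith)
      gcongr
  -- (m n / n) * log α₂ → log α₁
  have hslog : Tendsto (fun n : ℕ => (((m n : ℕ) : ℝ) / n) * Real.log α₂) atTop
      (nhds (Real.log α₁)) := by
    have h := hG.sub hlogm
    rw [sub_zero] at h
    refine h.congr fun n => by rw [hGdef]; ring
  have hs : Tendsto (fun n : ℕ => ((m n : ℕ) : ℝ) / n) atTop
      (nhds (Real.log α₁ / Real.log α₂)) := by
    have h := hslog.mul_const (Real.log α₂)⁻¹
    rw [div_eq_mul_inv]
    refine h.congr fun n => ?_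
    rw [mul_assoc, mul_inv_cancel₀ (ne_of_lt hlog₂), mul_one]
  have hfinal := hs.sub_const 1
  refine hfinal.congr' ?_
  filter_upwards [eventually_ge_atTop 1] with n hn1
  have hn0 : ((n:ℝ)) ≠ 0 := by
    have : (0:ℝ) < (n:ℝ) := by exact_mod_cast hn1
    exact ne_of_gt this
  show ((m n : ℕ) : ℝ) / n - 1 = (x n : ℝ) / n
  rw [hmdef]
  push_cast
  field_simp
  ring
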